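/- A finitely generated graded A_n(K)-module M is generalized Eulerian if and only if it is strongly generalized Eulerian. -/

import Mathlib

open FreeAlgebra

set_option synthInstance.maxHeartbeats 1000000
set_option maxHeartbeats 1000000

inductive WeylGen (n : ℕ) : Type
  | x : Fin n → WeylGen n
  | d : Fin n → WeylGen n

inductive WeylRel (K : Type) [Field K] (n : ℕ) :
    FreeAlgebra K (WeylGen n) → FreeAlgebra K (WeylGen n) → Prop
  | xx (i j : Fin n) : WeylRel K n (ι K (WeylGen.x i) * ι K (WeylGen.x j))
      (ι K (WeylGen.x j) * ι K (WeylGen.x i))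
  | dd (i j : Fin n) : WeylRel K n (ι K (WeylGen.d i) * ι K (WeylGen.d j))
      (ι K (WeylGen.d j) * ι K (WeylGen.d i))
  | dx_ne (i j : Fin n) (h : i ≠ j) : WeylRel K n (ι K (WeylGen.d i) * ι K (WeylGen.x j))
      (ι K (WeylGen.x j) * ι K (WeylGen.d i))
  | dx (i : Fin n) : WeylRel K n (ι K (WeylGen.d i) * ι K (WeylGen.x i))
      (1 + ι K (WeylGen.x i) * ι K (WeylGen.d i))

/-- The `n`-th Weyl algebra `A_n(K)`. -/
abbrev WeylAlgebra (K : Type) [Field K] (n : ℕ) := RingQuot (WeylRel K n)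

variable (K : Type) [Field K] (n : ℕ)

/-- The generator `X i`. -/
noncomputable def Wx (i : Fin n) : WeylAlgebra K n :=
  RingQuot.mkAlgHom K (WeylRel K n) (ι K (WeylGen.x i))

/-- The generator `∂ i`. -/
noncomputable def Wd (i : Fin n) : WeylAlgebra K n :=
  RingQuot.mkAlgHom K (WeylRel K n) (ι K (WeylGen.d i))

/-- The Euler operator `E_n = ∑ X_i ∂_i`. -/
noncomputable def euler : WeylAlgebra K n := ∑ i : Fin n, Wx K n i * Wd K n i

/-- The monomial `X^γ ∂^α`. -/
noncomputable def Wmonomial (γ α : Fin n → ℕ) : WeylAlgebra K n :=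
  (List.ofFn fun i => Wx K n i ^ γ i).prod * (List.ofFn fun i => Wd K n i ^ α i).prod

/-- `g` is a grading making `M` a graded module over the graded Weyl algebra
(`deg X_i = 1`, `deg ∂_i = -1`): `M` is the internal direct sum of the subgroups `g j` and
the generators act with degrees `1` and `-1`. -/
def IsGradedWeylModule (M : Type) [AddCommGroup M] [Module (WeylAlgebra K n) M]
    (g : ℤ → AddSubgroup M) : Prop :=
  DirectSum.IsInternal g ∧
    (∀ (i : Fin n) (j : ℤ), ∀ m ∈ g j, Wx K n i • m ∈ g (j + 1)) ∧
    (∀ (i : Fin n) (j : ℤ), ∀ m ∈ g j, Wd K n i • m ∈ g (j - 1))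

/-- A graded `A_n(K)`-module is strongly generalized Eulerian if there is a single `a > 0`
such that `(E_n - |w|)^a • w = 0` for every homogeneous `w`. -/
def IsStronglyGeneralizedEulerian (M : Type) [AddCommGroup M] [Module (WeylAlgebra K n) M]
    (g : ℤ → AddSubgroup M) : Prop :=
  ∃ a : ℕ, 0 < a ∧ ∀ (j : ℤ), ∀ m ∈ g j,
    ((euler K n - (j : WeylAlgebra K n)) ^ a) • m = 0

/-- A graded `A_n(K)`-module is generalized Eulerian if for every homogeneous `w` there is
some `a > 0` (depending on `w`) with `(E_n - |w|)^a • w = 0`. -/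
def IsGeneralizedEulerian (M : Type) [AddCommGroup M] [Module (WeylAlgebra K n) M]
    (g : ℤ → AddSubgroup M) : Prop :=
  ∀ (j : ℤ), ∀ m ∈ g j, ∃ a : ℕ, 0 < a ∧
    ((euler K n - (j : WeylAlgebra K n)) ^ a) • m = 0

namespace WeylProof

variable {K n}

lemma wx_comm (i j : Fin n) : Wx K n i * Wx K n j = Wx K n j * Wx K n i := by
  have := RingQuot.mkAlgHom_rel K (WeylRel.xx (K := K) i j)
  simpa only [map_mul, Wx] using this

lemma wd_wx_ne (i j : Fin n) (h : i ≠ j) : Wd K n i * Wx K n j = Wx K n j * Wd K n i := by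
  have := RingQuot.mkAlgHom_rel K (WeylRel.dx_ne (K := K) i j h)
  simpa only [map_mul, Wx, Wd] using this

lemma wd_comm (i j : Fin n) : Wd K n i * Wd K n j = Wd K n j * Wd K n i := by
  have := RingQuot.mkAlgHom_rel K (WeylRel.dd (K := K) i j)
  simpa only [map_mul, Wd] using this

lemma wd_wx (i : Fin n) : Wd K n i * Wx K n i = 1 + Wx K n i * Wd K n i := by
  have := RingQuot.mkAlgHom_rel K (WeylRel.dx (K := K) i)
  simpa only [map_mul, map_add, map_one, Wx, Wd] using this

lemma euler_wx (i : Fin n) :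
    euler K n * Wx K n i = Wx K n i * euler K n + Wx K n i := by
  unfold euler
  rw [Finset.sum_mul, Finset.mul_sum]
  have key : ∀ k : Fin n, Wx K n k * Wd K n k * Wx K n i
      = Wx K n i * (Wx K n k * Wd K n k) + if k = i then Wx K n i else 0 := by
    intro k
    by_cases h : k = i
    · subst h
      rw [if_pos rfl, mul_assoc, wd_wx, mul_add, mul_one]
      abel
    · rw [if_neg h, add_zero, mul_assoc, wd_wx_ne k i h, ← mul_assoc, wx_comm k i,
        mul_assoc]
  rw [Finset.sum_congr rfl fun k _ => key k, Finset.sum_add_distrib,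
    Finset.sum_ite_eq' Finset.univ i fun _ => Wx K n i, if_pos (Finset.mem_univ i)]

lemma euler_wd (i : Fin n) :
    euler K n * Wd K n i = Wd K n i * euler K n - Wd K n i := by
  unfold euler
  rw [Finset.sum_mul, Finset.mul_sum]
  have key : ∀ k : Fin n, Wx K n k * Wd K n k * Wd K n i
      = Wd K n i * (Wx K n k * Wd K n k) - if k = i then Wd K n i else 0 := by
    intro k
    by_cases h : k = i
    · subst h
      rw [if_pos rfl, ← mul_assoc, wd_wx, add_mul, one_mul]
      abel
    · rw [if_neg h, sub_zero, mul_assoc, wd_comm k i, ← mul_assoc,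
        ← wd_wx_ne i k (Ne.symm h), mul_assoc]
  rw [Finset.sum_congr rfl fun k _ => key k, Finset.sum_sub_distrib,
    Finset.sum_ite_eq' Finset.univ i fun _ => Wd K n i, if_pos (Finset.mem_univ i)]

lemma pow_swap {A : Type*} [Ring A] {u v x : A} (h : u * x = x * v) :
    ∀ a : ℕ, u ^ a * x = x * v ^ a
  | 0 => by simp
  | a + 1 => by
      rw [pow_succ, mul_assoc, h, ← mul_assoc, pow_swap h a, mul_assoc, ← pow_succ]

lemma key_x (i : Fin n) (j : ℤ) (a : ℕ) :
    (euler K n - (j : WeylAlgebra K n)) ^ a * Wx K n i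
      = Wx K n i * (euler K n - ((j - 1 : ℤ) : WeylAlgebra K n)) ^ a := by
  apply pow_swap
  have hc : (j : WeylAlgebra K n) * Wx K n i = Wx K n i * (j : WeylAlgebra K n) :=
    (Int.cast_commute j _)
  rw [sub_mul, euler_wx, hc]
  push_cast
  rw [mul_sub, mul_sub, mul_one]
  abel

lemma key_d (i : Fin n) (j : ℤ) (a : ℕ) :
    (euler K n - (j : WeylAlgebra K n)) ^ a * Wd K n i
      = Wd K n i * (euler K n - ((j + 1 : ℤ) : WeylAlgebra K n)) ^ a := by
  apply pow_swap
  have hc : (j : WeylAlgebra K n) * Wd K n i = Wd K n i * (j : WeylAlgebra K n) :=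
    (Int.cast_commute j _)
  rw [sub_mul, euler_wd, hc]
  push_cast
  rw [mul_sub, mul_add, mul_one]
  abel

lemma adjoin_eq_top :
    Algebra.adjoin K (Set.range (Wx K n) ∪ Set.range (Wd K n)) = ⊤ := by
  rw [eq_top_iff]
  rintro r -
  obtain ⟨p, rfl⟩ := RingQuot.mkAlgHom_surjective K (WeylRel K n) r
  induction p using FreeAlgebra.induction with
  | grade0 r => rw [AlgHom.commutes]; exact Subalgebra.algebraMap_mem _ r
  | grade1 x =>
      cases x with
      | x i => exact Algebra.subset_adjoin (Or.inl ⟨i, rfl⟩)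
      | d i => exact Algebra.subset_adjoin (Or.inr ⟨i, rfl⟩)
  | mul a b ha hb => rw [map_mul]; exact mul_mem ha hb
  | add a b ha hb => rw [map_add]; exact add_mem ha hb


section ModulePart

variable {M : Type} [AddCommGroup M] [Module (WeylAlgebra K n) M]
  {g : ℤ → AddSubgroup M}

/-- The decomposition isomorphism. -/
noncomputable def dec (hg : DirectSum.IsInternal g) : M ≃+ DirectSum ℤ (fun j => g j) :=
  (AddEquiv.ofBijective (DirectSum.coeAddMonoidHom g) hg).symm

/-- Projection onto the degree `j` component. -/
noncomputable def pr (hg : DirectSum.IsInternal g) (j : ℤ) (m : M) : M :=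
  (dec hg m j : M)

lemma pr_mem (hg : DirectSum.IsInternal g) (j : ℤ) (m : M) : pr hg j m ∈ g j :=
  (dec hg m j).2

lemma pr_zero (hg : DirectSum.IsInternal g) (j : ℤ) : pr hg j (0 : M) = 0 := by
  simp [pr, dec, map_zero]

lemma pr_add (hg : DirectSum.IsInternal g) (j : ℤ) (x y : M) :
    pr hg j (x + y) = pr hg j x + pr hg j y := by
  simp only [pr, map_add, DirectSum.add_apply, AddSubgroup.coe_add]

lemma dec_of (hg : DirectSum.IsInternal g) {j : ℤ} {w : M} (hw : w ∈ g j) :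
    dec hg w = DirectSum.of (fun i => g i) j ⟨w, hw⟩ := by
  rw [dec, AddEquiv.symm_apply_eq]
  exact (DirectSum.coeAddMonoidHom_of g j ⟨w, hw⟩).symm

lemma pr_of_mem (hg : DirectSum.IsInternal g) {j : ℤ} {w : M} (hw : w ∈ g j) :
    pr hg j w = w := by
  rw [pr, dec_of hg hw, DirectSum.of_eq_same]

lemma pr_of_ne (hg : DirectSum.IsInternal g) {e : ℤ} {w : M} (hw : w ∈ g e) {j : ℤ}
    (h : e ≠ j) : pr hg j w = 0 := by
  rw [pr, dec_of hg hw, DirectSum.of_eq_of_ne _ _ _ h.symm, AddSubgroup.coe_zero]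

lemma homog_induction (hg : DirectSum.IsInternal g) {P : M → Prop} (h0 : P 0)
    (hadd : ∀ x y, P x → P y → P (x + y)) (hw : ∀ (j : ℤ), ∀ w ∈ g j, P w) :
    ∀ m : M, P m := by
  intro m
  obtain ⟨x, rfl⟩ := hg.surjective m
  induction x using DirectSum.induction_on with
  | zero => simpa using h0
  | of i x => rw [DirectSum.coeAddMonoidHom_of]; exact hw i x x.2
  | add x y hx hy => rw [map_add]; exact hadd _ _ hx hy

lemma pr_shift (hg : DirectSum.IsInternal g) (r : WeylAlgebra K n) (d : ℤ)
    (Hr : ∀ (e : ℤ), ∀ w ∈ g e, r • w ∈ g (e + d)) :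
    ∀ (m : M) (j : ℤ), pr hg j (r • m) = r • pr hg (j - d) m := by
  refine homog_induction hg ?_ ?_ ?_
  · intro j; rw [smul_zero, pr_zero, pr_zero, smul_zero]
  · intro x y hx hy j
    rw [smul_add, pr_add, pr_add, hx, hy, smul_add]
  · intro e w hw j
    by_cases h : j = e + d
    · subst h
      rw [pr_of_mem hg (Hr e w hw), show e + d - d = e by omega, pr_of_mem hg hw]
    · rw [pr_of_ne hg (Hr e w hw) (fun hc => h hc.symm),
        pr_of_ne hg hw (by omega), smul_zero]

lemma exists_finsupp (hg : DirectSum.IsInternal g) :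
    ∀ m : M, ∃ s : Finset ℤ, (∀ j ∉ s, pr hg j m = 0) ∧ ∑ j ∈ s, pr hg j m = m := by
  refine homog_induction hg ?_ ?_ ?_
  · exact ⟨∅, fun j _ => pr_zero hg j, by simp⟩
  · intro x y ⟨sx, hx0, hxs⟩ ⟨sy, hy0, hys⟩
    refine ⟨sx ∪ sy, ?_, ?_⟩
    · intro j hj
      rw [pr_add, hx0 j (fun h => hj (Finset.mem_union_left _ h)),
        hy0 j (fun h => hj (Finset.mem_union_right _ h)), add_zero]
    · have hx : ∑ j ∈ sx ∪ sy, pr hg j x = x := by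
        rw [← Finset.sum_subset Finset.subset_union_left (fun j _ hj => hx0 j hj)]
        exact hxs
      have hy : ∑ j ∈ sx ∪ sy, pr hg j y = y := by
        rw [← Finset.sum_subset Finset.subset_union_right (fun j _ hj => hy0 j hj)]
        exact hys
      simp only [pr_add, Finset.sum_add_distrib, hx, hy]
  · intro e w hw
    refine ⟨{e}, ?_, ?_⟩
    · intro j hj
      exact pr_of_ne hg hw (fun hc => hj (by simp [hc]))
    · rw [Finset.sum_singleton, pr_of_mem hg hw]


section Euler

variable (hM : IsGradedWeylModule K n M g)
include hM

lemma euler_smul_mem {e : ℤ} {m : M} (hm : m ∈ g e) : euler K n • m ∈ g e := by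
  rw [euler, Finset.sum_smul]
  refine AddSubgroup.sum_mem _ fun i _ => ?_
  rw [mul_smul]
  have h1 : Wd K n i • m ∈ g (e - 1) := hM.2.2 i e m hm
  have h2 := hM.2.1 i (e - 1) _ h1
  rwa [show e - 1 + 1 = e by omega] at h2

lemma sub_smul_mem (j : ℤ) {e : ℤ} {m : M} (hm : m ∈ g e) :
    (euler K n - (j : WeylAlgebra K n)) • m ∈ g e := by
  rw [sub_smul, Int.cast_smul_eq_zsmul]
  exact AddSubgroup.sub_mem _ (euler_smul_mem hM hm) (AddSubgroup.zsmul_mem _ hm j)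

lemma pow_smul_mem (j : ℤ) (a : ℕ) {e : ℤ} {m : M} (hm : m ∈ g e) :
    ((euler K n - (j : WeylAlgebra K n)) ^ a) • m ∈ g e := by
  induction a with
  | zero => simpa using hm
  | succ a ih =>
      rw [pow_succ', mul_smul]
      exact sub_smul_mem hM j ih

lemma k_stable [CharZero K] (hge : IsGeneralizedEulerian K n M g) (c : K) {j : ℤ} {w : M}
    (hw : w ∈ g j) : (algebraMap K (WeylAlgebra K n) c) • w ∈ g j := by
  have hg := hM.1
  obtain ⟨a, -, ha⟩ := hge j w hw
  set m := (algebraMap K (WeylAlgebra K n) c) • w with hm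
  have hkill : ((euler K n - (j : WeylAlgebra K n)) ^ a) • m = 0 := by
    rw [hm, ← mul_smul, ← Algebra.commutes, mul_smul, ha, smul_zero]
  have hpr : ∀ e : ℤ, ((euler K n - (j : WeylAlgebra K n)) ^ a) • pr hg e m = 0 := by
    intro e
    have hsh := pr_shift hg ((euler K n - (j : WeylAlgebra K n)) ^ a) 0
      (fun e w hw => by simpa using pow_smul_mem hM j a hw) m e
    rw [sub_zero] at hsh
    rw [← hsh, hkill, pr_zero]
  have hzero : ∀ e : ℤ, e ≠ j → pr hg e m = 0 := by
    intro e he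
    obtain ⟨b, -, hb⟩ := hge e _ (pr_mem hg e m)
    have hne : ((e : ℤ) : K) - ((j : ℤ) : K) ≠ 0 := by
      rw [sub_ne_zero]
      exact fun hc => he (Int.cast_injective hc)
    have hcop : IsCoprime ((Polynomial.X - Polynomial.C ((e : ℤ) : K)) ^ b)
        ((Polynomial.X - Polynomial.C ((j : ℤ) : K)) ^ a) :=
      (Polynomial.isCoprime_X_sub_C_of_isUnit_sub hne.isUnit).pow
    obtain ⟨p, q, hpq⟩ := hcop
    have heval := congrArg (Polynomial.aeval (euler K n)) hpq
    simp only [map_add, map_mul, map_pow, map_sub, Polynomial.aeval_X, Polynomial.aeval_C,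
      map_intCast, map_one] at heval
    calc pr hg e m = (1 : WeylAlgebra K n) • pr hg e m := (one_smul _ _).symm
      _ = 0 := by
          rw [← heval, add_smul, mul_smul, mul_smul, hb, hpr e, smul_zero, smul_zero, add_zero]
  obtain ⟨s, -, hs⟩ := exists_finsupp hg m
  rw [← hs]
  refine AddSubgroup.sum_mem _ fun e _ => ?_
  by_cases hej : e = j
  · subst hej; exact pr_mem hg e m
  · rw [hzero e hej]; exact (g j).zero_mem
end Euler

section Pa

variable (hg : DirectSum.IsInternal g)

variable (K n) in
def Pa (a : ℕ) (m : M) : Prop :=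
  ∀ j : ℤ, ((euler K n - (j : WeylAlgebra K n)) ^ a) • pr hg j m = 0

lemma Pa_zero (a : ℕ) : Pa K n hg a (0 : M) := by
  intro j; rw [pr_zero, smul_zero]

lemma Pa_add {a : ℕ} {x y : M} (hx : Pa K n hg a x) (hy : Pa K n hg a y) : Pa K n hg a (x + y) := by
  intro j; rw [pr_add, smul_add, hx j, hy j, add_zero]

lemma Pa_mono {a b : ℕ} (hab : a ≤ b) {m : M} (hm : Pa K n hg a m) : Pa K n hg b m := by
  intro j
  rw [show b = (b - a) + a by omega, pow_add, mul_smul, hm j, smul_zero]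

lemma Pa_homog {a : ℕ} {j : ℤ} {w : M} (hw : w ∈ g j)
    (h : ((euler K n - (j : WeylAlgebra K n)) ^ a) • w = 0) : Pa K n hg a w := by
  intro e
  by_cases hej : e = j
  · subst hej; rw [pr_of_mem hg hw, h]
  · rw [pr_of_ne hg hw (fun hc => hej hc.symm), smul_zero]

variable (hM : IsGradedWeylModule K n M g)

lemma Pa_x (i : Fin n) {a : ℕ} {m : M} (hm : Pa K n hM.1 a m) : Pa K n hM.1 a (Wx K n i • m) := by
  intro j
  rw [pr_shift hM.1 (Wx K n i) 1 (fun e w hw => hM.2.1 i e w hw), ← mul_smul, key_x,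
    mul_smul, hm (j - 1), smul_zero]

lemma Pa_d (i : Fin n) {a : ℕ} {m : M} (hm : Pa K n hM.1 a m) : Pa K n hM.1 a (Wd K n i • m) := by
  intro j
  have hch : ∀ (e : ℤ), ∀ w ∈ g e, Wd K n i • w ∈ g (e + (-1)) := by
    intro e w hw
    simpa [sub_eq_add_neg] using hM.2.2 i e w hw
  rw [pr_shift hM.1 (Wd K n i) (-1) hch, ← mul_smul, sub_neg_eq_add, key_d,
    mul_smul, hm (j + 1), smul_zero]

lemma Pa_alg [CharZero K] (hge : IsGeneralizedEulerian K n M g) (c : K) {a : ℕ} {m : M}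
    (hm : Pa K n hM.1 a m) : Pa K n hM.1 a (algebraMap K (WeylAlgebra K n) c • m) := by
  intro j
  rw [pr_shift hM.1 (algebraMap K (WeylAlgebra K n) c) 0
      (fun e w hw => by simpa using k_stable hM hge c hw), sub_zero,
    ← mul_smul, ← Algebra.commutes, mul_smul, hm j, smul_zero]

lemma Pa_smul [CharZero K] (hge : IsGeneralizedEulerian K n M g) (r : WeylAlgebra K n)
    {a : ℕ} {m : M} (hm : Pa K n hM.1 a m) : Pa K n hM.1 a (r • m) := by
  let T : Subalgebra K (WeylAlgebra K n) :=
    { carrier := {r | ∀ m : M, Pa K n hM.1 a m → Pa K n hM.1 a (r • m)}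
      mul_mem' := fun {x y} hx hy m hm => by rw [mul_smul]; exact hx _ (hy _ hm)
      add_mem' := fun {x y} hx hy m hm => by rw [add_smul]; exact Pa_add hM.1 (hx _ hm) (hy _ hm)
      one_mem' := fun m hm => by rwa [one_smul]
      algebraMap_mem' := fun c m hm => Pa_alg hM hge c hm }
  have hsub : Algebra.adjoin K (Set.range (Wx K n) ∪ Set.range (Wd K n)) ≤ T := by
    refine Algebra.adjoin_le ?_
    rintro x (⟨i, rfl⟩ | ⟨i, rfl⟩)
    · exact fun m hm => Pa_x hM i hm
    · exact fun m hm => Pa_d hM i hm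
  have hrT : r ∈ T := hsub (by rw [adjoin_eq_top]; trivial)
  exact hrT m hm

end Pa

end ModulePart

end WeylProof

/-- A finitely generated graded `A_n(K)`-module is generalized Eulerian if and only if it is
strongly generalized Eulerian. -/
theorem ge_iff_sge_of_finite [CharZero K]
    (M : Type) [AddCommGroup M] [Module (WeylAlgebra K n) M]
    [Module.Finite (WeylAlgebra K n) M]
    (gM : ℤ → AddSubgroup M) (hM : IsGradedWeylModule K n M gM) :
    IsGeneralizedEulerian K n M gM ↔ IsStronglyGeneralizedEulerian K n M gM := by
  open WeylProof in
  constructor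
  · intro hge
    have hg := hM.1
    obtain ⟨S, hS⟩ : (⊤ : Submodule (WeylAlgebra K n) M).FG := Module.finite_def.mp ‹_›
    have hex : ∀ (j : ℤ) (y : M), ∃ a : ℕ,
        ((euler K n - (j : WeylAlgebra K n)) ^ a) • pr hg j y = 0 := by
      intro j y
      obtain ⟨a, -, ha⟩ := hge j _ (pr_mem hg j y)
      exact ⟨a, ha⟩
    choose A0 hA0 using hex
    choose sfin hsfin using exists_finsupp hg
    set aa : ℕ := 1 + S.sup (fun y => (sfin y).sup (fun j => A0 j y)) with haa
    have hPaS : ∀ y ∈ S, Pa K n hg aa y := by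
      intro y hy
      have hsum := (hsfin y).2
      rw [← hsum]
      refine Finset.sum_induction _ _ (fun a b ha hb => Pa_add hg ha hb) (Pa_zero hg aa) ?_
      intro j hj
      refine Pa_mono hg ?_ (Pa_homog hg (pr_mem hg j y) (hA0 j y))
      calc A0 j y ≤ (sfin y).sup (fun j => A0 j y) := Finset.le_sup (f := fun j => A0 j y) hj
        _ ≤ S.sup (fun y => (sfin y).sup (fun j => A0 j y)) := Finset.le_sup (f := fun y => (sfin y).sup (fun j => A0 j y)) hy
        _ ≤ aa := by omega
    have hPall : ∀ m : M, Pa K n hg aa m := by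
      intro m
      have hm : m ∈ Submodule.span (WeylAlgebra K n) (S : Set M) := by
        rw [hS]; trivial
      refine Submodule.span_induction (fun x hx => hPaS x hx) (Pa_zero hg aa)
        (fun x y _ _ hx hy => Pa_add hg hx hy)
        (fun r x _ hx => ?_) hm
      have := Pa_smul hM hge r hx
      exact this
    refine ⟨aa, by omega, fun j m hm => ?_⟩
    have := hPall m j
    rwa [pr_of_mem hg hm] at this
  · rintro ⟨a, ha, h⟩ j m hm
    exact ⟨a, ha, h j m hm⟩
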